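/- If (X,≼) is a preorder possessing a countable Debreu upper dense subset, then it has a strict monotone if and only if it has a countable multi-utility. -/
import Mathlib

open Real

/-- With a countable Debreu upper dense subset, a strict monotone exists iff a
countable multi-utility does. -/
theorem strict_monotone_iff_countable_multiutility {X : Type*} (le : X → X → Prop)
    (hrefl : ∀ x, le x x) (htrans : ∀ x y z, le x y → le y z → le x z)
    (D : Set X) (hD : D.Countable)
    (hDebreuUpperDense : ∀ x y, ¬ le x y → ¬ le y x →
      ∃ d ∈ D, (¬ le x d ∧ ¬ le d x) ∧ le d y) :
    (∃ f : X → ℝ, (∀ x y, le x y → f x ≤ f y) ∧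
        (∀ x y, le x y → ¬ le y x → f x < f y)) ↔
      (∃ u : ℕ → X → ℝ, ∀ x y, le x y ↔ ∀ n, u n x ≤ u n y) := by
  classical
  constructor
  · rintro ⟨f, hmono, hstrict⟩
    by_cases hne : D.Nonempty
    · obtain ⟨e, he⟩ := hD.exists_eq_range hne
      refine ⟨fun n => Nat.casesOn n f (fun m x => if le (e m) x then 1 else 0), fun x y => ?_⟩
      constructor
      · intro hxy n
        cases n with
        | zero => exact hmono x y hxy
        | succ m =>
          simp only
          by_cases h : le (e m) x
          · rw [if_pos h, if_pos (htrans _ _ _ h hxy)]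
          · rw [if_neg h]
            split <;> norm_num
      · intro h
        by_contra hxy
        by_cases hyx : le y x
        · exact absurd (h 0) (not_le.mpr (hstrict y x hyx hxy))
        · obtain ⟨d, hdD, ⟨hyd, hdy⟩, hdx⟩ := hDebreuUpperDense y x hyx hxy
          rw [he] at hdD
          obtain ⟨m, rfl⟩ := hdD
          have := h (m + 1)
          simp only [if_pos hdx, if_neg hdy] at this
          norm_num at this
    · -- D is empty, so le is total
      have htot : ∀ x y : X, le x y ∨ le y x := by
        intro x y
        by_contra h
        push_neg at h
        obtain ⟨d, hdD, _⟩ := hDebreuUpperDense x y h.1 h.2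
        exact hne ⟨d, hdD⟩
      refine ⟨fun _ => f, fun x y => ⟨fun hxy _ => hmono x y hxy, fun h => ?_⟩⟩
      by_contra hxy
      rcases htot x y with h' | hyx
      · exact hxy h'
      · exact absurd (h 0) (not_le.mpr (hstrict y x hyx hxy))
  · rintro ⟨u, hu⟩
    set g : ℕ → X → ℝ := fun n x => (1/2 : ℝ)^n * (Real.arctan (u n x) + π/2) with hg
    have hterm_nonneg : ∀ n x, 0 ≤ g n x := by
      intro n x
      apply mul_nonneg (by positivity)
      have := Real.neg_pi_div_two_lt_arctan (u n x)
      linarith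
    have hterm_le : ∀ n x, g n x ≤ (1/2 : ℝ)^n * π := by
      intro n x
      apply mul_le_mul_of_nonneg_left _ (by positivity)
      have := Real.arctan_lt_pi_div_two (u n x)
      linarith
    have hsum : ∀ x, Summable (fun n => g n x) := by
      intro x
      exact Summable.of_nonneg_of_le (fun n => hterm_nonneg n x) (fun n => hterm_le n x)
        (summable_geometric_two.mul_right π)
    refine ⟨fun x => ∑' n, g n x, fun x y hxy => ?_, fun x y hxy hyx => ?_⟩
    · apply Summable.tsum_le_tsum _ (hsum x) (hsum y)
      intro n
      exact mul_le_mul_of_nonneg_left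
        (by linarith [Real.arctan_strictMono.monotone ((hu x y).1 hxy n)]) (by positivity)
    · have hmono : ∀ n, g n x ≤ g n y := fun n =>
        mul_le_mul_of_nonneg_left
          (by linarith [Real.arctan_strictMono.monotone ((hu x y).1 hxy n)]) (by positivity)
      obtain ⟨m, hm⟩ : ∃ m, ¬ u m y ≤ u m x := by
        by_contra h
        push_neg at h
        exact hyx ((hu y x).2 h)
      have hlt : g m x < g m y := by
        apply mul_lt_mul_of_pos_left _ (by positivity)
        have := Real.arctan_strictMono (not_le.mp hm)
        linarith
      exact Summable.tsum_lt_tsum_of_nonneg (fun n => hterm_nonneg n x) hmono hlt (hsum y)
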